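/- Discrete chain rule for the discrete Fisher information: for vectors U^{k+1}, U^k ∈ ℝ^N_+ with V^k = √(U^k) componentwise and periodic indexing, F_d[U^{k+1}] − F_d[U^k] = h Σ_{i=0}^{N−1} δF_d(U^{k+1},U^k)_i (U_i^{k+1} − U_i^k), where F_d[U] = (h/2) Σ_i ((δ_i^+ V)² + (δ_i^− V)²) and δF_d(U^{k+1},U^k)_i = −δ_i^{⟨2⟩}(V^{k+1}+V^k) / (V_i^{k+1}+V_i^k). -/
import Mathlib


open Finset

private lemma shift_sum {N : ℕ} [NeZero N] (g : ZMod N → ℝ) :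
    ∑ i : ZMod N, g (i - 1) = ∑ i : ZMod N, g i :=
  Fintype.sum_equiv (Equiv.subRight 1) _ _ (fun _ => rfl)

/-- Discrete chain rule for the discrete Fisher information on a periodic grid. -/
theorem stmt_10 (N : ℕ) [NeZero N] (h : ℝ) (hh : 0 < h)
    (U0 U1 V0 V1 : ZMod N → ℝ)
    (hU0 : ∀ i, 0 < U0 i) (hU1 : ∀ i, 0 < U1 i)
    (hV0 : ∀ i, V0 i = Real.sqrt (U0 i)) (hV1 : ∀ i, V1 i = Real.sqrt (U1 i)) :
    (h / 2) * ∑ i : ZMod N,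
        (((V1 (i + 1) - V1 i) / h) ^ 2 + ((V1 i - V1 (i - 1)) / h) ^ 2)
      - (h / 2) * ∑ i : ZMod N,
        (((V0 (i + 1) - V0 i) / h) ^ 2 + ((V0 i - V0 (i - 1)) / h) ^ 2)
      = h * ∑ i : ZMod N,
        (-(((V1 (i + 1) + V0 (i + 1)) - 2 * (V1 i + V0 i) + (V1 (i - 1) + V0 (i - 1)))
              / h ^ 2) / (V1 i + V0 i)) * (U1 i - U0 i) := by
  have hne : h ≠ 0 := hh.ne'
  have hWpos : ∀ i : ZMod N, 0 < V1 i + V0 i := fun i => by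
    have h1 := Real.sqrt_pos.2 (hU1 i)
    have h0 := Real.sqrt_pos.2 (hU0 i)
    rw [hV1 i, hV0 i]; linarith
  have hU : ∀ i : ZMod N, U1 i - U0 i = (V1 i + V0 i) * (V1 i - V0 i) := fun i => by
    have h1 : V1 i ^ 2 = U1 i := by rw [hV1 i, Real.sq_sqrt (hU1 i).le]
    have h0 : V0 i ^ 2 = U0 i := by rw [hV0 i, Real.sq_sqrt (hU0 i).le]
    nlinarith [h1, h0]
  set φ : ZMod N → ℝ := fun i =>
    (V1 (i + 1) - V1 i) ^ 2 - (V0 (i + 1) - V0 i) ^ 2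
      - 2 * ((V1 (i + 1) - V1 i) + (V0 (i + 1) - V0 i)) * (V1 (i + 1) - V0 (i + 1))
    with hφ
  have key : ∑ i : ZMod N,
      ((V1 (i + 1) - V1 i) ^ 2 + (V1 i - V1 (i - 1)) ^ 2
        - ((V0 (i + 1) - V0 i) ^ 2 + (V0 i - V0 (i - 1)) ^ 2)
        + ((V1 (i + 1) + V0 (i + 1)) - 2 * (V1 i + V0 i) + (V1 (i - 1) + V0 (i - 1)))
            * (2 * (V1 i - V0 i))) = 0 := by
    have hpt : ∀ i : ZMod N,
        (V1 (i + 1) - V1 i) ^ 2 + (V1 i - V1 (i - 1)) ^ 2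
        - ((V0 (i + 1) - V0 i) ^ 2 + (V0 i - V0 (i - 1)) ^ 2)
        + ((V1 (i + 1) + V0 (i + 1)) - 2 * (V1 i + V0 i) + (V1 (i - 1) + V0 (i - 1)))
            * (2 * (V1 i - V0 i))
        = φ (i - 1) - φ i := by
      intro i
      simp only [hφ, sub_add_cancel]
      ring
    simp only [hpt]
    rw [Finset.sum_sub_distrib, shift_sum φ, sub_self]
  rw [← sub_eq_zero]
  have expand :
      (h / 2) * ∑ i : ZMod N,
          (((V1 (i + 1) - V1 i) / h) ^ 2 + ((V1 i - V1 (i - 1)) / h) ^ 2)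
        - (h / 2) * ∑ i : ZMod N,
          (((V0 (i + 1) - V0 i) / h) ^ 2 + ((V0 i - V0 (i - 1)) / h) ^ 2)
        - h * ∑ i : ZMod N,
          (-(((V1 (i + 1) + V0 (i + 1)) - 2 * (V1 i + V0 i) + (V1 (i - 1) + V0 (i - 1)))
                / h ^ 2) / (V1 i + V0 i)) * (U1 i - U0 i)
      = ∑ i : ZMod N, (h / (2 * h ^ 2)) *
          ((V1 (i + 1) - V1 i) ^ 2 + (V1 i - V1 (i - 1)) ^ 2
            - ((V0 (i + 1) - V0 i) ^ 2 + (V0 i - V0 (i - 1)) ^ 2)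
            + ((V1 (i + 1) + V0 (i + 1)) - 2 * (V1 i + V0 i) + (V1 (i - 1) + V0 (i - 1)))
                * (2 * (V1 i - V0 i))) := by
    rw [Finset.mul_sum, Finset.mul_sum, Finset.mul_sum, ← Finset.sum_sub_distrib,
      ← Finset.sum_sub_distrib]
    refine Finset.sum_congr rfl fun i _ => ?_
    rw [hU i]
    have hW : V1 i + V0 i ≠ 0 := (hWpos i).ne'
    field_simp
    ring
  rw [expand, ← Finset.mul_sum, key, mul_zero]
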